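/- (Proposition 2) Suppose Assumption 1 holds, γ_r > 0, γ_c > 0, and X = Σ_{r=1}^R Σ_{c=1}^C μ_{rc} χ_{A_r} χ_{B_c}^T for some real numbers μ_{rc}. Then Z = X is the unique global minimizer of F over ℝ^{n×p}. -/
import Mathlib


open Matrix BigOperators Finset

/-- The graph on `Fin n` with `i ~ j` iff `i ≠ j` and `w i j > 0` (for symmetric `w`). -/
def graphOf {n : ℕ} (w : Fin n → Fin n → ℝ) : SimpleGraph (Fin n) :=
  SimpleGraph.fromRel (fun i j => 0 < w i j)

/-- The 0/1 indicator vector of a subset. -/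
noncomputable def chi {n : ℕ} (A : Set (Fin n)) : Fin n → ℝ :=
  A.indicator (fun _ => (1 : ℝ))

/-- The BMC smoothing penalty
`J(Z) = (γr/2) ∑_{i<j} w i j ‖Z_{i·} - Z_{j·}‖² + (γc/2) ∑_{i<j} w̃ i j ‖Z_{·i} - Z_{·j}‖²`. -/
noncomputable def Jpen {n p : ℕ} (γr γc : ℝ) (w : Fin n → Fin n → ℝ)
    (wt : Fin p → Fin p → ℝ) (Z : Matrix (Fin n) (Fin p) ℝ) : ℝ :=
  γr / 2 * ∑ i, ∑ j ∈ Finset.Ioi i, w i j * ∑ k, (Z i k - Z j k) ^ 2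
    + γc / 2 * ∑ i, ∑ j ∈ Finset.Ioi i, wt i j * ∑ k, (Z k i - Z k j) ^ 2

/-- The BMC objective `F(Z) = (1/2) ∑_{(i,j) ∈ Ω} (X i j - Z i j)² + J(Z)`. -/
noncomputable def objF {n p : ℕ} (Ω : Finset (Fin n × Fin p)) (X : Matrix (Fin n) (Fin p) ℝ)
    (γr γc : ℝ) (w : Fin n → Fin n → ℝ) (wt : Fin p → Fin p → ℝ)
    (Z : Matrix (Fin n) (Fin p) ℝ) : ℝ :=
  (1 / 2) * ∑ q ∈ Ω, (X q.1 q.2 - Z q.1 q.2) ^ 2 + Jpen γr γc w wt Z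

/-- Proposition 2: under Assumption 1, if `X` has the biclustered form
`X = ∑_{r,c} μ_{rc} χ_{A_r} χ_{B_c}ᵀ`, then `Z = X` is the unique global minimizer of `F`. -/
theorem exact_recovery {n p R C : ℕ} (Ω : Finset (Fin n × Fin p))
    (X : Matrix (Fin n) (Fin p) ℝ) (γr γc : ℝ) (hγr : 0 < γr) (hγc : 0 < γc)
    (w : Fin n → Fin n → ℝ) (wt : Fin p → Fin p → ℝ)
    (hsymm : ∀ i j, w i j = w j i) (hnonneg : ∀ i j, 0 ≤ w i j)
    (hdiag : ∀ i, w i i = 0)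
    (hsymm' : ∀ i j, wt i j = wt j i) (hnonneg' : ∀ i j, 0 ≤ wt i j)
    (hdiag' : ∀ i, wt i i = 0)
    (A : Fin R → Set (Fin n))
    (eA : (graphOf w).ConnectedComponent ≃ Fin R)
    (hA : ∀ r, A r = {v | eA ((graphOf w).connectedComponentMk v) = r})
    (B : Fin C → Set (Fin p))
    (eB : (graphOf wt).ConnectedComponent ≃ Fin C)
    (hB : ∀ c, B c = {v | eB ((graphOf wt).connectedComponentMk v) = c})
    (hobs : ∀ r c, ∃ q ∈ Ω, q.1 ∈ A r ∧ q.2 ∈ B c)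
    (μ : Fin R → Fin C → ℝ)
    (hX : X = Matrix.of fun i j => ∑ r, ∑ c, μ r c * chi (A r) i * chi (B c) j) :
    (∀ Z' : Matrix (Fin n) (Fin p) ℝ, objF Ω X γr γc w wt X ≤ objF Ω X γr γc w wt Z') ∧
    (∀ Z : Matrix (Fin n) (Fin p) ℝ,
      (∀ Z' : Matrix (Fin n) (Fin p) ℝ, objF Ω X γr γc w wt Z ≤ objF Ω X γr γc w wt Z')
        → Z = X) := by
  -- X is constant on (row component) × (column component) blocks
  have hXconst : ∀ i i' j j', (graphOf w).connectedComponentMk i = (graphOf w).connectedComponentMk i' →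
      (graphOf wt).connectedComponentMk j = (graphOf wt).connectedComponentMk j' → X i j = X i' j' := by
    intro i i' j j' hi hj
    rw [hX]
    simp only [Matrix.of_apply]
    refine Finset.sum_congr rfl fun r _ => Finset.sum_congr rfl fun c _ => ?_
    have h1 : chi (A r) i = chi (A r) i' := by
      simp [chi, hA, Set.indicator_apply, Set.mem_setOf_eq, hi]
    have h2 : chi (B c) j = chi (B c) j' := by
      simp [chi, hB, Set.indicator_apply, Set.mem_setOf_eq, hj]
    rw [h1, h2]
  -- Jpen X = 0
  have hJX : Jpen γr γc w wt X = 0 := by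
    unfold Jpen
    have h1 : ∑ i, ∑ j ∈ Finset.Ioi i, w i j * ∑ k, (X i k - X j k) ^ 2 = 0 := by
      refine Finset.sum_eq_zero fun i _ => Finset.sum_eq_zero fun j hj => ?_
      rcases eq_or_lt_of_le (hnonneg i j) with h | h
      · rw [← h, zero_mul]
      · have hne : i ≠ j := ne_of_lt (Finset.mem_Ioi.mp hj)
        have hadj : (graphOf w).Adj i j := by
          rw [graphOf, SimpleGraph.fromRel_adj]
          exact ⟨hne, Or.inl h⟩
        have hc := SimpleGraph.ConnectedComponent.sound hadj.reachable
        have hz : ∑ k, (X i k - X j k) ^ 2 = 0 :=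
          Finset.sum_eq_zero fun k _ => by rw [hXconst i j k k hc rfl]; ring
        rw [hz, mul_zero]
    have h2 : ∑ i, ∑ j ∈ Finset.Ioi i, wt i j * ∑ k, (X k i - X k j) ^ 2 = 0 := by
      refine Finset.sum_eq_zero fun i _ => Finset.sum_eq_zero fun j hj => ?_
      rcases eq_or_lt_of_le (hnonneg' i j) with h | h
      · rw [← h, zero_mul]
      · have hne : i ≠ j := ne_of_lt (Finset.mem_Ioi.mp hj)
        have hadj : (graphOf wt).Adj i j := by
          rw [graphOf, SimpleGraph.fromRel_adj]
          exact ⟨hne, Or.inl h⟩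
        have hc := SimpleGraph.ConnectedComponent.sound hadj.reachable
        have hz : ∑ k, (X k i - X k j) ^ 2 = 0 :=
          Finset.sum_eq_zero fun k _ => by rw [hXconst k k i j rfl hc]; ring
        rw [hz, mul_zero]
    rw [h1, h2]; ring
  have hFX : objF Ω X γr γc w wt X = 0 := by
    unfold objF
    rw [hJX]
    have : ∑ q ∈ Ω, (X q.1 q.2 - X q.1 q.2) ^ 2 = 0 :=
      Finset.sum_eq_zero fun q _ => by ring
    rw [this]; ring
  -- nonnegativity of objF
  have hS1nn : ∀ Z : Matrix (Fin n) (Fin p) ℝ,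
      0 ≤ ∑ i, ∑ j ∈ Finset.Ioi i, w i j * ∑ k, (Z i k - Z j k) ^ 2 := fun Z =>
    Finset.sum_nonneg fun i _ => Finset.sum_nonneg fun j _ =>
      mul_nonneg (hnonneg i j) (Finset.sum_nonneg fun k _ => sq_nonneg _)
  have hS2nn : ∀ Z : Matrix (Fin n) (Fin p) ℝ,
      0 ≤ ∑ i, ∑ j ∈ Finset.Ioi i, wt i j * ∑ k, (Z k i - Z k j) ^ 2 := fun Z =>
    Finset.sum_nonneg fun i _ => Finset.sum_nonneg fun j _ =>
      mul_nonneg (hnonneg' i j) (Finset.sum_nonneg fun k _ => sq_nonneg _)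
  have hS0nn : ∀ Z : Matrix (Fin n) (Fin p) ℝ,
      0 ≤ ∑ q ∈ Ω, (X q.1 q.2 - Z q.1 q.2) ^ 2 := fun Z =>
    Finset.sum_nonneg fun q _ => sq_nonneg _
  have hFnn : ∀ Z : Matrix (Fin n) (Fin p) ℝ, 0 ≤ objF Ω X γr γc w wt Z := by
    intro Z
    unfold objF Jpen
    have h0 := hS0nn Z
    have h1 := mul_nonneg (by linarith : (0:ℝ) ≤ γr / 2) (hS1nn Z)
    have h2 := mul_nonneg (by linarith : (0:ℝ) ≤ γc / 2) (hS2nn Z)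
    linarith
  constructor
  · intro Z'
    rw [hFX]; exact hFnn Z'
  · intro Z hmin
    have hFZ : objF Ω X γr γc w wt Z = 0 :=
      le_antisymm (by rw [← hFX]; exact hmin X) (hFnn Z)
    -- extract the three zero sums
    have h0 := hS0nn Z
    have h1 := hS1nn Z
    have h2 := hS2nn Z
    have hc1 : (0:ℝ) < γr / 2 := by linarith
    have hc2 : (0:ℝ) < γc / 2 := by linarith
    unfold objF Jpen at hFZ
    have hS0 : ∑ q ∈ Ω, (X q.1 q.2 - Z q.1 q.2) ^ 2 = 0 := by nlinarith
    have hS1 : ∑ i, ∑ j ∈ Finset.Ioi i, w i j * ∑ k, (Z i k - Z j k) ^ 2 = 0 := by nlinarith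
    have hS2 : ∑ i, ∑ j ∈ Finset.Ioi i, wt i j * ∑ k, (Z k i - Z k j) ^ 2 = 0 := by nlinarith
    -- Z agrees with X on Ω
    have hZΩ : ∀ q ∈ Ω, Z q.1 q.2 = X q.1 q.2 := by
      intro q hq
      have := (Finset.sum_eq_zero_iff_of_nonneg (fun q _ => sq_nonneg _)).mp hS0 q hq
      have := sq_eq_zero_iff.mp this
      linarith
    -- termwise zero for rows
    have hrow0 : ∀ i j : Fin n, i < j → w i j * ∑ k, (Z i k - Z j k) ^ 2 = 0 := by
      intro i j hij
      have h := (Finset.sum_eq_zero_iff_of_nonneg (fun i _ => Finset.sum_nonneg fun j _ =>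
        mul_nonneg (hnonneg i j) (Finset.sum_nonneg fun k _ => sq_nonneg _))).mp hS1 i (Finset.mem_univ i)
      exact (Finset.sum_eq_zero_iff_of_nonneg (fun j _ =>
        mul_nonneg (hnonneg i j) (Finset.sum_nonneg fun k _ => sq_nonneg _))).mp h j (Finset.mem_Ioi.mpr hij)
    have hcol0 : ∀ i j : Fin p, i < j → wt i j * ∑ k, (Z k i - Z k j) ^ 2 = 0 := by
      intro i j hij
      have h := (Finset.sum_eq_zero_iff_of_nonneg (fun i _ => Finset.sum_nonneg fun j _ =>
        mul_nonneg (hnonneg' i j) (Finset.sum_nonneg fun k _ => sq_nonneg _))).mp hS2 i (Finset.mem_univ i)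
      exact (Finset.sum_eq_zero_iff_of_nonneg (fun j _ =>
        mul_nonneg (hnonneg' i j) (Finset.sum_nonneg fun k _ => sq_nonneg _))).mp h j (Finset.mem_Ioi.mpr hij)
    -- positive weight (any order) implies row equality
    have hkey : ∀ i j : Fin n, 0 < w i j → i ≠ j → ∀ k, Z i k = Z j k := by
      intro i j hw hne k
      rcases lt_or_gt_of_ne hne with h | h
      · have := hrow0 i j h
        have hz : ∑ k, (Z i k - Z j k) ^ 2 = 0 := by
          rcases mul_eq_zero.mp this with h' | h'
          · exact absurd h' (ne_of_gt hw)
          · exact h'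
        have := (Finset.sum_eq_zero_iff_of_nonneg (fun k _ => sq_nonneg _)).mp hz k (Finset.mem_univ k)
        have := sq_eq_zero_iff.mp this
        linarith
      · have hw' : 0 < w j i := by rw [← hsymm]; exact hw
        have := hrow0 j i h
        have hz : ∑ k, (Z j k - Z i k) ^ 2 = 0 := by
          rcases mul_eq_zero.mp this with h' | h'
          · exact absurd h' (ne_of_gt hw')
          · exact h'
        have := (Finset.sum_eq_zero_iff_of_nonneg (fun k _ => sq_nonneg _)).mp hz k (Finset.mem_univ k)
        have := sq_eq_zero_iff.mp this
        linarith
    have hkey' : ∀ i j : Fin p, 0 < wt i j → i ≠ j → ∀ k, Z k i = Z k j := by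
      intro i j hw hne k
      rcases lt_or_gt_of_ne hne with h | h
      · have := hcol0 i j h
        have hz : ∑ k, (Z k i - Z k j) ^ 2 = 0 := by
          rcases mul_eq_zero.mp this with h' | h'
          · exact absurd h' (ne_of_gt hw)
          · exact h'
        have := (Finset.sum_eq_zero_iff_of_nonneg (fun k _ => sq_nonneg _)).mp hz k (Finset.mem_univ k)
        have := sq_eq_zero_iff.mp this
        linarith
      · have hw' : 0 < wt j i := by rw [← hsymm']; exact hw
        have := hcol0 j i h
        have hz : ∑ k, (Z k j - Z k i) ^ 2 = 0 := by
          rcases mul_eq_zero.mp this with h' | h'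
          · exact absurd h' (ne_of_gt hw')
          · exact h'
        have := (Finset.sum_eq_zero_iff_of_nonneg (fun k _ => sq_nonneg _)).mp hz k (Finset.mem_univ k)
        have := sq_eq_zero_iff.mp this
        linarith
    -- adjacency implies row/column equality
    have hedge : ∀ i j : Fin n, (graphOf w).Adj i j → ∀ k, Z i k = Z j k := by
      intro i j hadj k
      rw [graphOf, SimpleGraph.fromRel_adj] at hadj
      obtain ⟨hne, h | h⟩ := hadj
      · exact hkey i j h hne k
      · exact (hkey j i h (Ne.symm hne) k).symm
    have hedge' : ∀ i j : Fin p, (graphOf wt).Adj i j → ∀ k, Z k i = Z k j := by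
      intro i j hadj k
      rw [graphOf, SimpleGraph.fromRel_adj] at hadj
      obtain ⟨hne, h | h⟩ := hadj
      · exact hkey' i j h hne k
      · exact (hkey' j i h (Ne.symm hne) k).symm
    -- reachability implies equality
    have hreach : ∀ i j : Fin n, (graphOf w).Reachable i j → ∀ k, Z i k = Z j k := by
      intro i j h
      obtain ⟨wk⟩ := h
      induction wk with
      | nil => intro k; rfl
      | cons hadj _ ih => intro k; rw [hedge _ _ hadj k]; exact ih k
    have hreach' : ∀ i j : Fin p, (graphOf wt).Reachable i j → ∀ k, Z k i = Z k j := by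
      intro i j h
      obtain ⟨wk⟩ := h
      induction wk with
      | nil => intro k; rfl
      | cons hadj _ ih => intro k; rw [hedge' _ _ hadj k]; exact ih k
    -- conclude Z = X
    ext i j
    set r := eA ((graphOf w).connectedComponentMk i) with hr
    set c := eB ((graphOf wt).connectedComponentMk j) with hc
    obtain ⟨q, hq, hq1, hq2⟩ := hobs r c
    rw [hA r, Set.mem_setOf_eq] at hq1
    rw [hB c, Set.mem_setOf_eq] at hq2
    have hci : (graphOf w).connectedComponentMk q.1 = (graphOf w).connectedComponentMk i :=
      eA.injective (by rw [hq1, hr])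
    have hcj : (graphOf wt).connectedComponentMk q.2 = (graphOf wt).connectedComponentMk j :=
      eB.injective (by rw [hq2, hc])
    have hri : ∀ k, Z q.1 k = Z i k :=
      hreach q.1 i (SimpleGraph.ConnectedComponent.eq.mp hci)
    have hcj' : ∀ k, Z k q.2 = Z k j :=
      hreach' q.2 j (SimpleGraph.ConnectedComponent.eq.mp hcj)
    calc Z i j = Z q.1 j := (hri j).symm
      _ = Z q.1 q.2 := (hcj' q.1).symm
      _ = X q.1 q.2 := hZΩ q hq
      _ = X i j := hXconst q.1 i q.2 j hci hcj
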